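/- Let K be a field and let I ⊂ K[x,y] be a monomial ideal of height 2 generated in degree d (i.e., all minimal monomial generators of I have total degree d), with μ(I) = m, and set J = (x^d, y^d). Then μ(I^k) = k(m−1) + 1 for some k ≥ 2 if and only if I^2 = JI. -/

import Mathlib

open MvPolynomial

/-- The minimal number of generators of an ideal. -/
noncomputable def mu {R : Type*} [CommRing R] (I : Ideal R) : ℕ :=
  sInf {m : ℕ | ∃ s : Finset R, s.card = m ∧ Ideal.span (s : Set R) = I}

/-- A monomial ideal of `K[x,y]` has height 2 iff it is proper and contains a power of `x`
and a power of `y`. -/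
def HasHeightTwo {K : Type*} [Field K] (I : Ideal (MvPolynomial (Fin 2) K)) : Prop :=
  I ≠ ⊤ ∧ ∃ k l : ℕ, 0 < k ∧ 0 < l ∧
    (X 0 : MvPolynomial (Fin 2) K) ^ k ∈ I ∧ (X 1 : MvPolynomial (Fin 2) K) ^ l ∈ I

/-- A monomial ideal generated (necessarily minimally) in degree `d`. -/
def IsMonomialGeneratedInDegree {K : Type*} [Field K]
    (I : Ideal (MvPolynomial (Fin 2) K)) (d : ℕ) : Prop :=
  ∃ S : Set (Fin 2 →₀ ℕ), S.Nonempty ∧ (∀ v ∈ S, v 0 + v 1 = d) ∧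
    I = Ideal.span ((fun v => monomial v (1 : K)) '' S)

open Pointwise

noncomputable section NumGenAux
variable {K : Type*} [Field K]

def eV (D a : ℕ) : Fin 2 →₀ ℕ := Finsupp.single 0 a + Finsupp.single 1 (D - a)
@[simp] lemma eV_apply0 (D a : ℕ) : eV D a 0 = a := by simp [eV]
@[simp] lemma eV_apply1 (D a : ℕ) : eV D a 1 = D - a := by simp [eV, Finsupp.single_apply]
lemma eV_inj (D : ℕ) : Function.Injective (eV D) := fun a b h => by
  have := congrArg (fun f => f 0) h; simpa using this
lemma eq_eV {D : ℕ} {v : Fin 2 →₀ ℕ} (hv : v 0 + v 1 = D) : v = eV D (v 0) := by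
  ext i; fin_cases i <;> simp <;> omega
lemma eV_add {D E a b : ℕ} (ha : a ≤ D) (hb : b ≤ E) :
    eV D a + eV E b = eV (D + E) (a + b) := by
  ext i; fin_cases i <;> simp <;> omega
lemma eV_le_eV {D a b : ℕ} (hb : b ≤ D) (h : eV D a ≤ eV D b) : a = b := by
  have h0 := h 0; have h1 := h 1; simp at h0 h1; omega

/-- the monomial ideal with x-exponents `B`, in degree `D`. -/
def mId (K : Type*) [Field K] (D : ℕ) (B : Finset ℕ) : Ideal (MvPolynomial (Fin 2) K) :=
  Ideal.span ((fun v => monomial v (1 : K)) '' (eV D '' ↑B))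

lemma mem_mId_iff {D : ℕ} {B : Finset ℕ} {p : MvPolynomial (Fin 2) K} :
    p ∈ mId K D B ↔ ∀ xi ∈ p.support, ∃ b ∈ B, eV D b ≤ xi := by
  rw [mId, mem_ideal_span_monomial_image]
  simp

lemma monomial_mem_mId {D : ℕ} {B : Finset ℕ} (hB : ∀ b ∈ B, b ≤ D) {a : ℕ} (ha : a ≤ D) :
    monomial (eV D a) (1 : K) ∈ mId K D B ↔ a ∈ B := by
  rw [mem_mId_iff]
  classical
  rw [support_monomial, if_neg (one_ne_zero (α := K))]
  simp only [Finset.mem_singleton, forall_eq]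
  constructor
  · rintro ⟨b, hb, hle⟩
    rwa [← eV_le_eV ha hle]
  · exact fun h => ⟨a, h, le_rfl⟩

lemma mId_mul {D E : ℕ} {B C : Finset ℕ} (hB : ∀ b ∈ B, b ≤ D) (hC : ∀ c ∈ C, c ≤ E) :
    mId K D B * mId K E C = mId K (D + E) (B + C) := by
  rw [mId, mId, mId, Ideal.span_mul_span']
  congr 1
  ext p
  simp only [Set.mem_mul, Set.mem_image, Finset.mem_coe, Finset.mem_add]
  constructor
  · rintro ⟨-, ⟨-, ⟨b, hb, rfl⟩, rfl⟩, -, ⟨-, ⟨c, hc, rfl⟩, rfl⟩, rfl⟩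
    refine ⟨eV (D+E) (b+c), ⟨b+c, ⟨b, hb, c, hc, rfl⟩, rfl⟩, ?_⟩
    rw [monomial_mul, one_mul, eV_add (hB b hb) (hC c hc)]
  · rintro ⟨-, ⟨-, ⟨b, hb, c, hc, rfl⟩, rfl⟩, rfl⟩
    refine ⟨monomial (eV D b) 1, ⟨eV D b, ⟨b, hb, rfl⟩, rfl⟩,
      monomial (eV E c) 1, ⟨eV E c, ⟨c, hc, rfl⟩, rfl⟩, ?_⟩
    rw [monomial_mul, one_mul, eV_add (hB b hb) (hC c hc)]

lemma mId_le_mId {D : ℕ} {B C : Finset ℕ} (hB : ∀ b ∈ B, b ≤ D) (hC : ∀ c ∈ C, c ≤ D)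
    (h : mId K D B ≤ mId K D C) : B ⊆ C := by
  intro b hb
  rw [← monomial_mem_mId (K := K) hC (hB b hb)]
  exact h ((monomial_mem_mId hB (hB b hb)).2 hb)

lemma mId_inj {D : ℕ} {B C : Finset ℕ} (hB : ∀ b ∈ B, b ≤ D) (hC : ∀ c ∈ C, c ≤ D) :
    mId K D B = mId K D C ↔ B = C := by
  constructor
  · intro h
    exact Finset.Subset.antisymm (mId_le_mId hB hC h.le) (mId_le_mId hC hB h.ge)
  · rintro rfl; rfl


def sumIter (A : Finset ℕ) : ℕ → Finset ℕ
  | 0 => {0}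
  | k+1 => sumIter A k + A

def unions (A : Finset ℕ) (d : ℕ) : ℕ → Finset ℕ
  | 0 => ∅
  | k+1 => unions A d k ∪ A.image (k * d + ·)

section Comb
variable {A : Finset ℕ} {d : ℕ}

lemma zero_mem_sumIter (h0 : 0 ∈ A) (k : ℕ) : 0 ∈ sumIter A k := by
  induction k with
  | zero => simp [sumIter]
  | succ k ih => exact Finset.mem_add.2 ⟨0, ih, 0, h0, rfl⟩

lemma mul_mem_sumIter (hd : d ∈ A) (k : ℕ) : k * d ∈ sumIter A k := by
  induction k with
  | zero => simp [sumIter]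
  | succ k ih => exact Finset.mem_add.2 ⟨k * d, ih, d, hd, by ring⟩

lemma sumIter_bound (hA : ∀ a ∈ A, a ≤ d) : ∀ k, ∀ x ∈ sumIter A k, x ≤ k * d := by
  intro k
  induction k with
  | zero => simp [sumIter]
  | succ k ih =>
    intro x hx
    obtain ⟨y, hy, a, ha, rfl⟩ := Finset.mem_add.1 hx
    have := ih y hy; have := hA a ha
    have : (k+1) * d = k * d + d := by ring
    omega

lemma mem_unions_iff : ∀ k, ∀ x, x ∈ unions A d k ↔ ∃ i < k, ∃ a ∈ A, i * d + a = x := by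
  intro k
  induction k with
  | zero => simp [unions]
  | succ k ih =>
    intro x
    simp only [unions, Finset.mem_union, ih, Finset.mem_image]
    constructor
    · rintro (⟨i, hi, a, ha, rfl⟩ | ⟨a, ha, rfl⟩)
      · exact ⟨i, by omega, a, ha, rfl⟩
      · exact ⟨k, by omega, a, ha, rfl⟩
    · rintro ⟨i, hi, a, ha, rfl⟩
      rcases Nat.lt_or_ge i k with h | h
      · exact Or.inl ⟨i, h, a, ha, rfl⟩
      · have : i = k := by omega
        subst this
        exact Or.inr ⟨a, ha, rfl⟩

lemma unions_bound (hA : ∀ a ∈ A, a ≤ d) : ∀ k, ∀ x ∈ unions A d k, x ≤ k * d := by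
  intro k x hx
  obtain ⟨i, hi, a, ha, rfl⟩ := (mem_unions_iff k x).1 hx
  have := hA a ha
  have h1 : (i+1) * d ≤ k * d := Nat.mul_le_mul_right d (by omega)
  have h2 : (i+1) * d = i * d + d := by ring
  omega

lemma unions_card (h0 : 0 ∈ A) (hd : d ∈ A) (hA : ∀ a ∈ A, a ≤ d) : ∀ k, 1 ≤ k → (unions A d k).card = k * (A.card - 1) + 1 := by
  have hm : 1 ≤ A.card := Finset.card_pos.2 ⟨0, h0⟩
  intro k
  induction k with
  | zero => omega
  | succ k ih =>
    intro _
    rcases Nat.eq_zero_or_pos k with rfl | hk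
    · show (unions A d 0 ∪ A.image (0 * d + ·)).card = _
      have : A.image (0 * d + ·) = A := by
        rw [Nat.zero_mul]; simp
      rw [this]
      show ((∅ : Finset ℕ) ∪ A).card = _
      rw [Finset.empty_union]
      omega
    · have hIm : (A.image (k * d + ·)).card = A.card :=
        Finset.card_image_of_injective _ (add_right_injective _)
      have hint : unions A d k ∩ A.image (k * d + ·) = {k * d} := by
        apply Finset.Subset.antisymm
        · intro x hx
          rw [Finset.mem_inter] at hx
          obtain ⟨hx1, hx2⟩ := hx
          have hb := unions_bound hA k x hx1
          obtain ⟨a, -, rfl⟩ := Finset.mem_image.1 hx2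
          simp only [Finset.mem_singleton]
          omega
        · intro x hx
          rw [Finset.mem_singleton] at hx
          subst hx
          rw [Finset.mem_inter]
          constructor
          · rw [mem_unions_iff]
            exact ⟨k - 1, by omega, d, hd, by cases k with | zero => omega | succ k => simp; ring⟩
          · exact Finset.mem_image.2 ⟨0, h0, by simp⟩
      have := Finset.card_union_add_card_inter (unions A d k) (A.image (k * d + ·))
      rw [hint, hIm, ih hk, Finset.card_singleton] at this
      show (unions A d k ∪ A.image (k * d + ·)).card = (k+1) * (A.card - 1) + 1
      have hexp : (k+1) * (A.card - 1) = k * (A.card - 1) + (A.card - 1) := by ring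
      omega

lemma unions_subset_sumIter (h0 : 0 ∈ A) (hd : d ∈ A) : ∀ k, unions A d k ⊆ sumIter A k := by
  intro k
  induction k with
  | zero => simp [unions]
  | succ k ih =>
    intro x hx
    rcases Finset.mem_union.1 hx with hx | hx
    · exact Finset.mem_add.2 ⟨x, ih hx, 0, h0, by omega⟩
    · obtain ⟨a, ha, rfl⟩ := Finset.mem_image.1 hx
      exact Finset.mem_add.2 ⟨k * d, mul_mem_sumIter hd k, a, ha, rfl⟩

lemma image_add_sumset (c : ℕ) (B C : Finset ℕ) :
    B.image (c + ·) + C = (B + C).image (c + ·) := by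
  ext x
  simp only [Finset.mem_add, Finset.mem_image]
  constructor
  · rintro ⟨-, ⟨b, hb, rfl⟩, y, hy, rfl⟩
    exact ⟨b + y, ⟨b, hb, y, hy, rfl⟩, by omega⟩
  · rintro ⟨-, ⟨b, hb, y, hy, rfl⟩, rfl⟩
    exact ⟨c + b, ⟨b, hb, rfl⟩, y, hy, by omega⟩

lemma unions_add (H : A + A = A ∪ A.image (d + ·)) :
    ∀ k, 1 ≤ k → unions A d k + A = unions A d (k + 1) := by
  intro k
  induction k with
  | zero => omega
  | succ k ih =>
    intro _
    rcases Nat.eq_zero_or_pos k with rfl | hk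
    · show (unions A d 0 ∪ A.image (0 * d + ·)) + A = unions A d 1 ∪ A.image (1 * d + ·)
      have h1 : A.image (0 * d + ·) = A := by rw [Nat.zero_mul]; simp
      have h2 : unions A d 1 = A := by
        show unions A d 0 ∪ A.image (0 * d + ·) = A
        rw [h1]; exact Finset.empty_union A
      rw [h1, h2]
      show (∅ ∪ A) + A = A ∪ A.image (1 * d + ·)
      rw [Finset.empty_union, H, Nat.one_mul]
    · show (unions A d k ∪ A.image (k * d + ·)) + A = unions A d (k+1) ∪ A.image ((k+1) * d + ·)
      rw [Finset.union_add, ih hk, image_add_sumset, H, Finset.image_union,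
        Finset.image_image]
      have h3 : ((k * d + ·) ∘ (d + ·)) = ((k+1) * d + ·) := by
        funext x; simp; ring
      rw [h3]
      have h4 : A.image (k * d + ·) ⊆ unions A d (k+1) := Finset.subset_union_right
      rw [← Finset.union_assoc]
      congr 1
      exact Finset.union_eq_left.2 h4
lemma sumIter_eq_unions (H : A + A = A ∪ A.image (d + ·)) :
    ∀ k, 1 ≤ k → sumIter A k = unions A d k := by
  intro k
  induction k with
  | zero => omega
  | succ k ih =>
    intro _
    rcases Nat.eq_zero_or_pos k with rfl | hk
    · show sumIter A 0 + A = unions A d 0 ∪ A.image (0 * d + ·)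
      have h1 : A.image (0 * d + ·) = A := by rw [Nat.zero_mul]; simp
      rw [h1]
      show ({0} : Finset ℕ) + A = ∅ ∪ A
      rw [Finset.empty_union, Finset.singleton_add]
      simp
    · show sumIter A k + A = _
      rw [ih hk, unions_add H k hk]

lemma shift_mem_sumIter (hd : d ∈ A) {x : ℕ} : ∀ j i, x ∈ sumIter A i → j * d + x ∈ sumIter A (i + j) := by
  intro j
  induction j with
  | zero => intro i hx; simpa using hx
  | succ j ih =>
    intro i hx
    have : (j+1) * d + x = (j * d + x) + d := by ring
    rw [this]
    show _ ∈ sumIter A (i + j) + A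
    exact Finset.mem_add.2 ⟨j * d + x, ih i hx, d, hd, rfl⟩

lemma comb_mp (h0 : 0 ∈ A) (hd : d ∈ A) (hA : ∀ a ∈ A, a ≤ d) (k : ℕ) (hk : 2 ≤ k)
    (hcard : (sumIter A k).card = k * (A.card - 1) + 1) :
    A + A = A ∪ A.image (d + ·) := by
  apply Finset.Subset.antisymm
  · intro x hx
    by_contra hxn
    obtain ⟨a, ha, b, hb, rfl⟩ := Finset.mem_add.1 hx
    rw [Finset.mem_union, Finset.mem_image] at hxn
    push_neg at hxn
    obtain ⟨hc1, hc2⟩ := hxn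
    set c := a + b with hcdef
    have hc0 : 0 < c := by
      rcases Nat.eq_zero_or_pos c with h | h
      · exfalso; apply hc1; rw [h] at hcdef ⊢; exact h0
      · exact h
    have hcd : c < 2 * d := by
      have hax := hA a ha; have hbx := hA b hb
      rcases Nat.lt_or_ge c (2*d) with h | h
      · exact h
      · exfalso
        have haa : a = d := by omega
        have hbb : b = d := by omega
        exact hc2 d hd (by omega)
    -- the extra element
    set w := (k - 2) * d + c with hw
    have hwmem : w ∈ sumIter A k := by
      have h2 : c ∈ sumIter A 2 := by
        show c ∈ sumIter A 1 + A
        refine Finset.mem_add.2 ⟨a, ?_, b, hb, rfl⟩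
        show a ∈ sumIter A 0 + A
        exact Finset.mem_add.2 ⟨0, by simp [sumIter], a, ha, by omega⟩
      have := shift_mem_sumIter hd (k - 2) 2 h2
      have hkk : 2 + (k - 2) = k := by omega
      rwa [hkk] at this
    have hwnot : w ∉ unions A d k := by
      intro hmem
      obtain ⟨i, hik, a', ha', heq⟩ := (mem_unions_iff k w).1 hmem
      have ha'd := hA a' ha'
      rcases Nat.lt_trichotomy i (k - 2) with h | h | h
      · -- i ≤ k - 3, so i * d + a' ≤ (k-2) * d < w
        have hk3 : i + 1 ≤ k - 2 := by omega
        have h1 : i * d + d ≤ (k - 2) * d := by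
          have := Nat.mul_le_mul_right d hk3
          rw [Nat.add_mul, Nat.one_mul] at this
          exact this
        omega
      · subst h
        have : a' = c := by omega
        exact hc1 (this ▸ ha')
      · have hik1 : i = k - 1 := by omega
        subst hik1
        have hsplit : (k - 1) * d = (k - 2) * d + d := by
          have : k - 1 = (k - 2) + 1 := by omega
          rw [this, Nat.add_mul, Nat.one_mul]
        rw [hsplit] at heq
        exact hc2 a' ha' (by omega)
    have hsub : insert w (unions A d k) ⊆ sumIter A k :=
      Finset.insert_subset hwmem (unions_subset_sumIter h0 hd k)
    have hcard2 := Finset.card_le_card hsub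
    rw [Finset.card_insert_of_notMem hwnot, unions_card h0 hd hA k (by omega), hcard] at hcard2
    omega
  · intro x hx
    rcases Finset.mem_union.1 hx with hx | hx
    · exact Finset.mem_add.2 ⟨x, hx, 0, h0, by omega⟩
    · obtain ⟨a, ha, rfl⟩ := Finset.mem_image.1 hx
      exact Finset.mem_add.2 ⟨d, hd, a, ha, rfl⟩

lemma comb_main (h0 : 0 ∈ A) (hd : d ∈ A) (hA : ∀ a ∈ A, a ≤ d) :
    (∃ k, 2 ≤ k ∧ (sumIter A k).card = k * (A.card - 1) + 1) ↔
      A + A = A ∪ A.image (d + ·) := by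
  constructor
  · rintro ⟨k, hk, hc⟩
    exact comb_mp h0 hd hA k hk hc
  · intro H
    refine ⟨2, le_refl 2, ?_⟩
    rw [sumIter_eq_unions H 2 (by omega), unions_card h0 hd hA 2 (by omega)]

end Comb

/-- key coefficient identity: if all coefficients of `p` live in degrees `≥ D`, then for `t`
of degree `D`, `coeff t (a * p) = coeff 0 a * coeff t p`. -/
lemma coeff_mul_eq {p a : MvPolynomial (Fin 2) K}
    (hp : ∀ b ∈ p.support, D ≤ b 0 + b 1) {t : Fin 2 →₀ ℕ} (ht : t 0 + t 1 = D) :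
    coeff t (a * p) = coeff 0 a * coeff t p := by
  rw [coeff_mul]
  refine Finset.sum_eq_single_of_mem (0, t) (by simp) ?_
  rintro ⟨x, y⟩ hxy hne
  rw [Finset.HasAntidiagonal.mem_antidiagonal] at hxy
  by_cases hy : coeff y p = 0
  · simp [hy]
  · exfalso
    have hyD : D ≤ y 0 + y 1 := hp y (mem_support_iff.2 hy)
    have h0 : x 0 + y 0 = t 0 := by rw [← hxy]; simp
    have h1 : x 1 + y 1 = t 1 := by rw [← hxy]; simp
    have hx0 : x 0 = 0 := by omega
    have hx1 : x 1 = 0 := by omega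
    have hx : x = 0 := by ext i; fin_cases i <;> assumption
    have hy' : y = t := by rw [← hxy, hx, zero_add]
    exact hne (by rw [hx, hy'])

lemma mu_mId {D : ℕ} {B : Finset ℕ} (hB : ∀ b ∈ B, b ≤ D) : mu (mId K D B) = B.card := by
  classical
  have hinj : Function.Injective (fun v : Fin 2 →₀ ℕ => monomial v (1 : K)) :=
    monomial_left_injective one_ne_zero
  set T : Finset (Fin 2 →₀ ℕ) := B.image (eV D) with hT
  have hTcoe : (↑T : Set (Fin 2 →₀ ℕ)) = eV D '' ↑B := Finset.coe_image
  have hTcard : T.card = B.card := Finset.card_image_of_injective _ (eV_inj D)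
  apply le_antisymm
  · -- upper bound
    apply Nat.sInf_le
    refine ⟨T.image (fun v => monomial v (1 : K)), ?_, ?_⟩
    · rw [Finset.card_image_of_injective _ hinj, hTcard]
    · rw [mId, Finset.coe_image, hTcoe]
  · -- lower bound
    refine le_csInf ⟨B.card, T.image (fun v => monomial v (1:K)),
      by rw [Finset.card_image_of_injective _ hinj, hTcard],
      by rw [mId, Finset.coe_image, hTcoe]⟩ ?_
    rintro n ⟨s, hscard, hspan⟩
    -- the coefficient-extraction linear map
    set c : MvPolynomial (Fin 2) K →ₗ[K] (↥T → K) :=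
      LinearMap.pi (fun t => lcoeff K (t : Fin 2 →₀ ℕ)) with hc
    have hsupp : ∀ p ∈ mId K D B, ∀ b ∈ p.support, D ≤ b 0 + b 1 := by
      intro p hp b hb
      obtain ⟨u, hu, hub⟩ := mem_mId_iff.1 hp b hb
      have h0 := hub 0; have h1 := hub 1
      simp only [eV_apply0, eV_apply1] at h0 h1
      have := hB u hu
      omega
    have key : ∀ p, p ∈ Ideal.span (↑s : Set (MvPolynomial (Fin 2) K)) →
        c p ∈ Submodule.span K (⇑c '' ↑s) := by
      intro p hp
      induction hp using Submodule.span_induction with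
      | mem x h => exact Submodule.subset_span ⟨x, h, rfl⟩
      | zero => rw [map_zero]; exact Submodule.zero_mem _
      | add x y hx hy ihx ihy => rw [map_add]; exact Submodule.add_mem _ ihx ihy
      | smul a x hx ih =>
        have hxI : x ∈ mId K D B := by rw [← hspan]; exact hx
        have : c (a • x) = coeff 0 a • c x := by
          funext t
          have ht : (t : Fin 2 →₀ ℕ) 0 + (t : Fin 2 →₀ ℕ) 1 = D := by
            obtain ⟨b, hb, hbt⟩ := Finset.mem_image.1 t.2
            rw [← hbt]
            simp only [eV_apply0, eV_apply1]
            have := hB b hb; omega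
          simp only [hc, smul_eq_mul, LinearMap.pi_apply, lcoeff_apply, Pi.smul_apply]
          rw [coeff_mul_eq (hsupp x hxI) ht]
        rw [this]
        exact Submodule.smul_mem _ _ ih
    have hsingle : ∀ t : ↥T, Pi.single t (1:K) ∈ Submodule.span K (⇑c '' ↑s) := by
      intro t
      have hmem : monomial (t : Fin 2 →₀ ℕ) (1:K) ∈ Ideal.span (↑s : Set _) := by
        rw [hspan, mId]
        exact Ideal.subset_span ⟨(t : Fin 2 →₀ ℕ), by rw [← hTcoe]; exact t.2, rfl⟩
      have := key _ hmem
      convert this using 1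
      funext t'
      simp only [hc, LinearMap.pi_apply, lcoeff_apply, coeff_monomial]
      rw [Pi.single_apply]
      by_cases h : t' = t
      · subst h; simp
      · rw [if_neg h, if_neg (fun he => h (Subtype.ext he.symm))]
    have htop : Submodule.span K (⇑c '' ↑s) = ⊤ := by
      rw [eq_top_iff, ← (Pi.basisFun K ↥T).span_eq, Submodule.span_le]
      rintro - ⟨t, rfl⟩
      have : (Pi.basisFun K ↥T) t = Pi.single t (1:K) := by
        funext t'; simp [Pi.basisFun_apply, Function.update,
          Pi.single_apply, eq_comm]
      rw [this]
      exact hsingle t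
    have h1 : Module.finrank K (↥T → K) = T.card := by
      rw [Module.finrank_fintype_fun_eq_card, Fintype.card_coe]
    have h2 : Module.finrank K (↥T → K) ≤ (s.image ⇑c).card := by
      have := finrank_span_finset_le_card (R := K) (s.image ⇑c)
      rw [Finset.coe_image, Set.finrank, htop] at this
      simpa [finrank_top] using this
    calc B.card = T.card := hTcard.symm
      _ = Module.finrank K (↥T → K) := h1.symm
      _ ≤ (s.image ⇑c).card := h2
      _ ≤ s.card := Finset.card_image_le
      _ = n := hscard


lemma mId_pow {d : ℕ} {A : Finset ℕ} (hA : ∀ a ∈ A, a ≤ d) (k : ℕ) :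
    (mId K d A) ^ k = mId K (k * d) (sumIter A k) := by
  induction k with
  | zero =>
    rw [pow_zero, sumIter, Nat.zero_mul]
    have h1 : (eV 0 '' (↑({0} : Finset ℕ)) : Set (Fin 2 →₀ ℕ)) = {0} := by
      ext v; simp [eV]
    rw [mId, h1, Ideal.one_eq_top, Set.image_singleton, monomial_zero', C_1,
      Ideal.span_singleton_one]
  | succ k ih =>
    rw [pow_succ, ih, mId_mul (sumIter_bound hA k) hA]
    congr 1
    ring


end NumGenAux
section Main

lemma eV_d0 (d : ℕ) : eV d 0 = Finsupp.single 1 d := by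
  ext i; fin_cases i <;> simp [eV, Finsupp.single_apply]

lemma eV_dd (d : ℕ) : eV d d = Finsupp.single 0 d := by
  ext i; fin_cases i <;> simp [eV, Finsupp.single_apply]

lemma span_pair_eq_mId {K : Type*} [Field K] (d : ℕ) :
    (Ideal.span {X 0 ^ d, X 1 ^ d} : Ideal (MvPolynomial (Fin 2) K)) =
      mId K d ({0, d} : Finset ℕ) := by
  rw [mId]
  congr 1
  rw [show ((↑({0, d} : Finset ℕ) : Set ℕ)) = {0, d} by simp]
  rw [Set.image_pair, Set.image_pair, eV_d0, eV_dd, ← X_pow_eq_monomial, ← X_pow_eq_monomial]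
  exact (Set.pair_comm _ _)

/-- Corollary 3.5: let `I ⊂ K[x,y]` be a monomial ideal of height 2 generated in degree `d`
with `μ(I) = m`, and let `J = (x^d, y^d)`. Then `μ(I^k) = k(m-1)+1` for some `k ≥ 2` if and
only if `I² = JI`. -/
theorem numGen_power_eq_iff_reduction {K : Type*} [Field K]
    (I : Ideal (MvPolynomial (Fin 2) K)) (d m : ℕ)
    (hgen : IsMonomialGeneratedInDegree I d) (hht : HasHeightTwo I) (hm : mu I = m) :
    (∃ k : ℕ, 2 ≤ k ∧ mu (I ^ k) = k * (m - 1) + 1) ↔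
      I ^ 2 = (Ideal.span {X 0 ^ d, X 1 ^ d} : Ideal (MvPolynomial (Fin 2) K)) * I := by
  classical
  obtain ⟨S, hSne, hdeg, hspan⟩ := hgen
  -- S is finite
  have hSfin : S.Finite := by
    apply Set.Finite.subset ((Set.finite_Iic d).image (eV d))
    intro v hv
    exact ⟨v 0, by have := hdeg v hv; simp [Set.mem_Iic]; omega, (eq_eV (hdeg v hv)).symm⟩
  set A : Finset ℕ := hSfin.toFinset.image (fun v => v 0) with hAdef
  have hSA : S = eV d '' ↑A := by
    ext v
    constructor
    · intro hv
      exact ⟨v 0, by simp [hAdef]; exact ⟨v, hv, rfl⟩, (eq_eV (hdeg v hv)).symm⟩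
    · rintro ⟨a, ha, rfl⟩
      simp only [hAdef, Finset.coe_image, Set.mem_image, Finset.mem_coe,
        Set.Finite.mem_toFinset] at ha
      obtain ⟨u, hu, rfl⟩ := ha
      rwa [← eq_eV (hdeg u hu)]
  have hI : I = mId K d A := by rw [hspan, mId, hSA]
  have hA : ∀ a ∈ A, a ≤ d := by
    intro a ha
    simp only [hAdef, Finset.mem_image, Set.Finite.mem_toFinset] at ha
    obtain ⟨u, hu, rfl⟩ := ha
    have := hdeg u hu; omega
  -- d ∈ A and 0 ∈ A from height two
  obtain ⟨-, k0, l0, hk0, hl0, hxk, hyl⟩ := hht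
  have hdA : d ∈ A := by
    rw [hI] at hxk
    rw [X_pow_eq_monomial] at hxk
    have := mem_mId_iff.1 hxk
    rw [support_monomial, if_neg (one_ne_zero (α := K))] at this
    obtain ⟨b, hb, hble⟩ := this (Finsupp.single 0 k0) (Finset.mem_singleton_self _)
    have h1 := hble 1
    simp [Finsupp.single_apply] at h1
    have := hA b hb
    have hbd : b = d := by omega
    rwa [← hbd]
  have h0A : 0 ∈ A := by
    rw [hI] at hyl
    rw [X_pow_eq_monomial] at hyl
    have := mem_mId_iff.1 hyl
    rw [support_monomial, if_neg (one_ne_zero (α := K))] at this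
    obtain ⟨b, hb, hble⟩ := this (Finsupp.single 1 l0) (Finset.mem_singleton_self _)
    have h0 := hble 0
    simp [Finsupp.single_apply] at h0
    rwa [← h0]
  -- μ(I) = |A|
  have hmu : mu I = A.card := by rw [hI, mu_mId hA]
  have hmA : m = A.card := by rw [← hm, hmu]
  -- μ(I^k) = |sumIter A k|
  have hpow : ∀ k : ℕ, mu (I ^ k) = (sumIter A k).card := by
    intro k
    rw [hI, mId_pow hA k, mu_mId (sumIter_bound hA k)]
  -- sumIter A 2 = A + A
  have hs2 : sumIter A 2 = A + A := by
    show sumIter A 1 + A = A + A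
    congr 1
    show sumIter A 0 + A = A
    show ({0} : Finset ℕ) + A = A
    rw [Finset.singleton_add]
    simp
  -- {0, d} + A = A ∪ A.image (d + ·)
  have hJA : ({0, d} : Finset ℕ) + A = A ∪ A.image (d + ·) := by
    ext x
    simp only [Finset.mem_add, Finset.mem_union, Finset.mem_image, Finset.mem_insert,
      Finset.mem_singleton]
    constructor
    · rintro ⟨b, (rfl | rfl), a, ha, rfl⟩
      · left; simpa using ha
      · right; exact ⟨a, ha, rfl⟩
    · rintro (hx | ⟨a, ha, rfl⟩)
      · exact ⟨0, Or.inl rfl, x, hx, by omega⟩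
      · exact ⟨d, Or.inr rfl, a, ha, rfl⟩
  -- the right-hand side, combinatorially
  have hRHS : (I ^ 2 = (Ideal.span {X 0 ^ d, X 1 ^ d} : Ideal (MvPolynomial (Fin 2) K)) * I)
      ↔ A + A = A ∪ A.image (d + ·) := by
    rw [hI, span_pair_eq_mId, mId_pow hA 2,
      mId_mul (fun b hb => by
        simp only [Finset.mem_insert, Finset.mem_singleton] at hb
        rcases hb with rfl | rfl <;> omega) hA]
    have h2d : 2 * d = d + d := by ring
    rw [h2d]
    rw [mId_inj (by rw [← h2d]; exact sumIter_bound hA 2)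
      (by
        intro x hx
        obtain ⟨b, hb, a, ha, rfl⟩ := Finset.mem_add.1 hx
        simp only [Finset.mem_insert, Finset.mem_singleton] at hb
        have := hA a ha
        rcases hb with rfl | rfl <;> omega)]
    rw [hs2, hJA]
  rw [hRHS, hmA]
  constructor
  · rintro ⟨k, hk, hc⟩
    refine comb_mp h0A hdA hA k hk ?_
    rw [← hpow k]; exact hc
  · intro H
    obtain ⟨k, hk, hc⟩ := (comb_main h0A hdA hA).2 H
    exact ⟨k, hk, by rw [hpow k]; exact hc⟩

end Main
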